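/- Let P = {1,…,n} be a poset compatible with the natural order on integers. Then the set A(P) of order-reversing maps P → ℤ≥0 is the disjoint union, over all linear extensions π ∈ e(P), of the sets S_π of π-compatible functions. That is, every order-reversing map σ : P → ℤ≥0 is π-compatible for exactly one π ∈ e(P), and every π-compatible function for π ∈ e(P) is order-reversing. -/

import Mathlib

/-- `f` is `π`-compatible: its values weakly decrease along `π` and strictly decrease
at each descent of `π`. -/
def PiCompatible (n : ℕ) (π : Equiv.Perm (Fin n)) (f : Fin n → ℕ) : Prop :=
  (∀ (i : ℕ) (h : i + 1 < n),
      f (π ⟨i + 1, h⟩) ≤ f (π ⟨i, Nat.lt_of_succ_lt h⟩)) ∧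
  (∀ (i : ℕ) (h : i + 1 < n),
      π ⟨i + 1, h⟩ < π ⟨i, Nat.lt_of_succ_lt h⟩ →
      f (π ⟨i + 1, h⟩) < f (π ⟨i, Nat.lt_of_succ_lt h⟩))

/-- `π` belongs to the Jordan–Hölder set `e(P)`: if `p_i <_P p_j` then `i < j`. -/
def IsLinearExtension (n : ℕ) (po : PartialOrder (Fin n)) (π : Equiv.Perm (Fin n)) : Prop :=
  ∀ i j : Fin n, po.lt (π i) (π j) → i < j

/-- Helper: lexicographic comparison encoded into ℕ. -/
lemma aux_lex_lt {n a b x y : ℕ} (hx : x < n) (hy : y < n) :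
    a * n + x < b * n + y ↔ a < b ∨ (a = b ∧ x < y) := by
  constructor
  · intro h
    rcases lt_trichotomy a b with h1 | h1 | h1
    · exact Or.inl h1
    · exact Or.inr ⟨h1, by subst h1; omega⟩
    · exfalso
      have h2 : b * n + n ≤ a * n := by
        rw [← Nat.succ_mul]; exact Nat.mul_le_mul_right n h1
      omega
  · rintro (h1 | ⟨rfl, h1⟩)
    · have h2 : a * n + n ≤ b * n := by
        rw [← Nat.succ_mul]; exact Nat.mul_le_mul_right n h1
      omega
    · omega

/-- Helper: weak decrease along consecutive steps gives antitone. -/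
lemma aux_antitone {n : ℕ} {F : Fin n → ℕ}
    (h : ∀ (i : ℕ) (hi : i + 1 < n), F ⟨i + 1, hi⟩ ≤ F ⟨i, Nat.lt_of_succ_lt hi⟩) :
    ∀ (a b : Fin n), a ≤ b → F b ≤ F a := by
  have key : ∀ (b : ℕ) (hb : b < n) (a : ℕ) (ha : a < n), a ≤ b → F ⟨b, hb⟩ ≤ F ⟨a, ha⟩ := by
    intro b
    induction b with
    | zero =>
      intro hb a ha hab
      have : a = 0 := by omega
      subst this; exact le_refl _
    | succ m ih =>
      intro hb a ha hab
      rcases Nat.lt_or_ge a (m + 1) with h1 | h1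
      · exact le_trans (h m hb) (ih (by omega) a ha (by omega))
      · have : a = m + 1 := by omega
        subst this; exact le_refl _
  intro a b hab
  exact key b.val b.isLt a.val a.isLt hab

/-- Helper: strict increase along consecutive steps gives strict mono. -/
lemma aux_strictMono {n : ℕ} {F : Fin n → ℕ}
    (h : ∀ (i : ℕ) (hi : i + 1 < n), F ⟨i, Nat.lt_of_succ_lt hi⟩ < F ⟨i + 1, hi⟩) :
    StrictMono F := by
  have key : ∀ (b : ℕ) (hb : b < n) (a : ℕ) (ha : a < n), a < b → F ⟨a, ha⟩ < F ⟨b, hb⟩ := by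
    intro b
    induction b with
    | zero => intro hb a ha hab; omega
    | succ m ih =>
      intro hb a ha hab
      rcases Nat.lt_or_ge a m with h1 | h1
      · exact lt_trans (ih (by omega) a ha h1) (h m hb)
      · have : a = m := by omega
        subst this; exact h a hb
  intro a b hab
  exact key b.val b.isLt a.val a.isLt hab

/-- Main work for existence/uniqueness, with the partial order passed as plain relations
to avoid instance pollution. -/
lemma aux_main (n : ℕ) (plt ple : Fin n → Fin n → Prop)
    (hlt_le : ∀ i j : Fin n, plt i j → ple i j)
    (hcompat : ∀ i j : Fin n, plt i j → i < j)
    (σ : Fin n → ℕ) (hσ : ∀ i j : Fin n, ple i j → σ j ≤ σ i) :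
    ∃! π : Equiv.Perm (Fin n),
      (∀ i j : Fin n, plt (π i) (π j) → i < j) ∧ PiCompatible n π σ := by
  set M := Finset.univ.sup σ with hM
  have hle : ∀ i : Fin n, σ i ≤ M := fun i => Finset.le_sup (Finset.mem_univ i)
  set key : Fin n → ℕ := fun i => (M - σ i) * n + i.val with hkey
  have key_lt : ∀ i j : Fin n, key i < key j ↔ σ j < σ i ∨ (σ i = σ j ∧ i < j) := by
    intro i j
    rw [hkey]
    simp only
    rw [aux_lex_lt i.isLt j.isLt]
    have hi := hle i
    have hj := hle j
    rw [Fin.lt_def]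
    constructor
    · rintro (h | ⟨h, h2⟩)
      · left; omega
      · right; exact ⟨by omega, h2⟩
    · rintro (h | ⟨h, h2⟩)
      · left; omega
      · right; exact ⟨by omega, h2⟩
  have key_inj : Function.Injective key := by
    intro i j hij
    have e1 : ¬ (σ j < σ i ∨ (σ i = σ j ∧ i < j)) := by rw [← key_lt]; omega
    have e2 : ¬ (σ i < σ j ∨ (σ j = σ i ∧ j < i)) := by rw [← key_lt]; omega
    rcases lt_trichotomy (σ i) (σ j) with h | h | h
    · exact absurd (Or.inl h) e2
    · rcases Nat.lt_trichotomy i.val j.val with h' | h' | h'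
      · exact absurd (Or.inr ⟨h, Fin.lt_def.mpr h'⟩) e1
      · exact Fin.ext h'
      · exact absurd (Or.inr ⟨h.symm, Fin.lt_def.mpr h'⟩) e2
    · exact absurd (Or.inl h) e1
  have char : ∀ π : Equiv.Perm (Fin n),
      StrictMono (fun k => key (π k)) ↔
        ((∀ i j : Fin n, plt (π i) (π j) → i < j) ∧ PiCompatible n π σ) := by
    intro π
    constructor
    · intro hsm
      refine ⟨?_, ?_, ?_⟩
      · intro i j hij
        have hij' : π i < π j := hcompat _ _ hij
        have hσle : σ (π j) ≤ σ (π i) := hσ _ _ (hlt_le _ _ hij)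
        have hk : key (π i) < key (π j) := by
          rw [key_lt]
          rcases lt_or_eq_of_le hσle with h | h
          · exact Or.inl h
          · exact Or.inr ⟨h.symm, hij'⟩
        exact hsm.lt_iff_lt.mp hk
      · intro i h
        have hk : key (π ⟨i, Nat.lt_of_succ_lt h⟩) < key (π ⟨i + 1, h⟩) :=
          hsm (Fin.mk_lt_mk.mpr (Nat.lt_succ_self i))
        rw [key_lt] at hk
        rcases hk with h1 | ⟨h1, _⟩
        · exact le_of_lt h1
        · exact le_of_eq h1.symm
      · intro i h hdesc
        have hk : key (π ⟨i, Nat.lt_of_succ_lt h⟩) < key (π ⟨i + 1, h⟩) :=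
          hsm (Fin.mk_lt_mk.mpr (Nat.lt_succ_self i))
        rw [key_lt] at hk
        rcases hk with h1 | ⟨_, h2⟩
        · exact h1
        · exact absurd hdesc (asymm h2)
    · rintro ⟨hlin, hw, hs⟩
      apply aux_strictMono
      intro i hi
      rw [key_lt]
      rcases lt_or_eq_of_le (hw i hi) with h1 | h1
      · exact Or.inl h1
      · refine Or.inr ⟨h1.symm, ?_⟩
        rcases lt_trichotomy (π ⟨i, Nat.lt_of_succ_lt hi⟩) (π ⟨i + 1, hi⟩) with h2 | h2 | h2
        · exact h2
        · have h3 := congrArg Fin.val (π.injective h2)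
          simp only [Fin.val_mk] at h3
          omega
        · exact absurd (hs i hi h2) (by omega)
  set π₀ := Tuple.sort key with hπ₀
  have hsm₀ : StrictMono (fun k => key (π₀ k)) := by
    have hmono : Monotone (key ∘ π₀) := Tuple.monotone_sort key
    exact hmono.strictMono_of_injective (key_inj.comp π₀.injective)
  refine ⟨π₀, (char π₀).mp hsm₀, ?_⟩
  intro π' hπ'
  have hsm' : StrictMono (fun k => key (π' k)) := (char π').mpr hπ'
  have hrange : Set.range (fun k => key (π' k)) = Set.range (fun k => key (π₀ k)) := by
    have e1 : Set.range (fun k => key (π' k)) = key '' Set.range π' := by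
      rw [← Set.range_comp]; rfl
    have e2 : Set.range (fun k => key (π₀ k)) = key '' Set.range π₀ := by
      rw [← Set.range_comp]; rfl
    rw [e1, e2, Equiv.range_eq_univ, Equiv.range_eq_univ]
  haveI : WellFoundedLT (Fin n) := Finite.to_wellFoundedLT
  have heq : (fun k => key (π' k)) = (fun k => key (π₀ k)) :=
    (hsm'.range_inj hsm₀).mp hrange
  exact Equiv.ext fun k => key_inj (congrFun heq k)

/-- Main work for the converse, with the partial order passed as plain relations. -/
lemma aux_part2 (n : ℕ) (plt ple : Fin n → Fin n → Prop)
    (hsplit : ∀ i j : Fin n, ple i j → i = j ∨ plt i j)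
    (π : Equiv.Perm (Fin n)) (σ : Fin n → ℕ)
    (hlin : ∀ i j : Fin n, plt (π i) (π j) → i < j)
    (hcomp : PiCompatible n π σ) :
    ∀ i j : Fin n, ple i j → σ j ≤ σ i := by
  intro i j hij
  rcases hsplit i j hij with rfl | hlt
  · exact le_refl _
  · have h1 : plt (π (π.symm i)) (π (π.symm j)) := by simpa using hlt
    have h2 : π.symm i < π.symm j := hlin _ _ h1
    have h3 := aux_antitone (F := fun k => σ (π k)) hcomp.1 _ _ (le_of_lt h2)
    simpa using h3

theorem order_reversing_disjoint_union_compatible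
    (n : ℕ) (po : PartialOrder (Fin n))
    (hcompat : ∀ i j : Fin n, po.lt i j → i < j) :
    (∀ σ : Fin n → ℕ, (∀ i j : Fin n, po.le i j → σ j ≤ σ i) →
      ∃! π : Equiv.Perm (Fin n), IsLinearExtension n po π ∧ PiCompatible n π σ) ∧
    (∀ (π : Equiv.Perm (Fin n)) (σ : Fin n → ℕ),
      IsLinearExtension n po π → PiCompatible n π σ →
      ∀ i j : Fin n, po.le i j → σ j ≤ σ i) := by
  constructor
  · intro σ hσ
    exact aux_main n po.lt po.le
      (fun i j h => ((po.lt_iff_le_not_ge i j).mp h).1) hcompat σ hσ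
  · intro π σ hlin hcomp
    refine aux_part2 n po.lt po.le ?_ π σ hlin hcomp
    intro i j h
    by_cases h' : po.le j i
    · exact Or.inl (po.le_antisymm i j h h')
    · exact Or.inr ((po.lt_iff_le_not_ge i j).mpr ⟨h, h'⟩)
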